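/- Each of the three smooth vector fields v₁(x,y,w) = (1,0,0), v₂(x,y,w) = (0,1,0), and v₃(x,y,w) = (2x, y, w) on ℝ³ is an infinitesimal symmetry of the parabolic system Σ_P; hence so is every real linear combination a·v₃ + b·v₁ + c·v₂ with a,b,c ∈ ℝ. -/

import Mathlib

open Real Set

/-- The state space ℝ³ with coordinates (x, y, w). -/
abbrev V3 : Type := Fin 3 → ℝ

/-- Lie bracket of vector fields: [v,u](ξ) = Du(ξ)·v(ξ) − Dv(ξ)·u(ξ). -/
noncomputable def lieBr (v u : V3 → V3) : V3 → V3 :=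
  fun ξ => fderiv ℝ u ξ (v ξ) - fderiv ℝ v ξ (u ξ)

/-- `v` is an infinitesimal symmetry of the control-affine system `(f, g)` on `U`. -/
def InfSymmOn (U : Set V3) (f g v : V3 → V3) : Prop :=
  ∀ ξ ∈ U, (∃ c : ℝ, lieBr v g ξ = c • g ξ) ∧ (∃ c : ℝ, lieBr v f ξ = c • g ξ)

/-- The control vector field g₀ = ∂/∂w. -/
def g0 : V3 → V3 := fun _ => ![0, 0, 1]

/-- Drift of the parabolic system Σ_P. -/
noncomputable def fP : V3 → V3 := fun ξ => ![(ξ 2) ^ 2, ξ 2, 0]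

open ContinuousLinearMap in
/-- Jacobian of fP. -/
noncomputable def DfP (ξ : V3) : V3 →L[ℝ] V3 :=
  ContinuousLinearMap.pi ![(2 * ξ 2) • proj 2, proj 2, 0]

open ContinuousLinearMap in
/-- Jacobian of v₃. -/
noncomputable def D3 : V3 →L[ℝ] V3 :=
  ContinuousLinearMap.pi ![(2:ℝ) • proj 0, proj 1, proj 2]

lemma hasFDerivAt_fP (ξ : V3) : HasFDerivAt fP (DfP ξ) ξ := by
  apply hasFDerivAt_pi''
  intro i
  fin_cases i
  · have h := (hasFDerivAt_apply (2 : Fin 3) ξ (𝕜 := ℝ))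
    have h2 := h.mul h
    convert h2 using 1
    · rfl
    · funext η; simp [fP, pow_two]
    · ext η; simp [DfP]; ring
  · convert hasFDerivAt_apply (2 : Fin 3) ξ (𝕜 := ℝ) using 1
    · rfl
    · rfl
    · rfl
    · funext η; simp [fP]
    · ext η; simp [DfP]
  · convert hasFDerivAt_const (0:ℝ) ξ using 1
    · rfl
    · rfl
    · rfl
    · funext η; simp [fP]
    · ext η; simp [DfP]

lemma fderiv_fP (ξ : V3) : fderiv ℝ fP ξ = DfP ξ := (hasFDerivAt_fP ξ).fderiv

lemma hasFDerivAt_v3 (ξ : V3) :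
    HasFDerivAt (fun ξ : V3 => ![2 * ξ 0, ξ 1, ξ 2]) D3 ξ := by
  have : (fun ξ : V3 => ![2 * ξ 0, ξ 1, ξ 2]) = fun ξ => D3 ξ := by
    funext ξ i; fin_cases i <;> simp [D3]
  rw [this]
  exact D3.hasFDerivAt

lemma fderiv_v3 (ξ : V3) : fderiv ℝ (fun ξ : V3 => ![2 * ξ 0, ξ 1, ξ 2]) ξ = D3 :=
  (hasFDerivAt_v3 ξ).fderiv

lemma hasFDerivAt_vabc (a b c : ℝ) (ξ : V3) :
    HasFDerivAt
      (fun ξ : V3 => a • ![2 * ξ 0, ξ 1, ξ 2] + b • ![(1:ℝ), 0, 0] + c • ![(0:ℝ), 1, 0])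
      (a • D3) ξ :=
  (((hasFDerivAt_v3 ξ).const_smul a).add_const (b • ![(1:ℝ), 0, 0])).add_const
    (c • ![(0:ℝ), 1, 0])

/-- v₁ = (1,0,0), v₂ = (0,1,0), v₃ = (2x,y,w) are infinitesimal symmetries
of Σ_P, and hence so is every real linear combination a·v₃ + b·v₁ + c·v₂. -/
theorem symmetries_of_parabolic :
    InfSymmOn univ fP g0 (fun _ => ![1, 0, 0]) ∧
    InfSymmOn univ fP g0 (fun _ => ![0, 1, 0]) ∧
    InfSymmOn univ fP g0 (fun ξ => ![2 * ξ 0, ξ 1, ξ 2]) ∧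
    ∀ a b c : ℝ,
      InfSymmOn univ fP g0
        (fun ξ => a • ![2 * ξ 0, ξ 1, ξ 2] + b • ![(1:ℝ), 0, 0] + c • ![(0:ℝ), 1, 0]) := by
  have hg0 : ∀ ξ : V3, fderiv ℝ g0 ξ = 0 := fun ξ => fderiv_const_apply _
  refine ⟨?_, ?_, ?_, ?_⟩
  · intro ξ _
    constructor
    · exact ⟨0, by simp [lieBr, hg0, fderiv_const_apply]⟩
    · refine ⟨0, ?_⟩
      simp only [lieBr, fderiv_fP, fderiv_const_apply]
      funext i; fin_cases i <;> simp [DfP, g0]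
  · intro ξ _
    constructor
    · exact ⟨0, by simp [lieBr, hg0, fderiv_const_apply]⟩
    · refine ⟨0, ?_⟩
      simp only [lieBr, fderiv_fP, fderiv_const_apply]
      funext i; fin_cases i <;> simp [DfP, g0]
  · intro ξ _
    constructor
    · refine ⟨-1, ?_⟩
      simp only [lieBr, fderiv_v3, hg0]
      funext i; fin_cases i <;> simp [D3, g0]
    · refine ⟨0, ?_⟩
      simp only [lieBr, fderiv_fP, fderiv_v3]
      funext i; fin_cases i <;> simp [DfP, D3, fP, g0] <;> ring
  · intro a b c ξ _
    have hD : fderiv ℝ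
        (fun ξ : V3 => a • ![2 * ξ 0, ξ 1, ξ 2] + b • ![(1:ℝ), 0, 0] + c • ![(0:ℝ), 1, 0]) ξ
        = a • D3 := (hasFDerivAt_vabc a b c ξ).fderiv
    constructor
    · refine ⟨-a, ?_⟩
      simp only [lieBr, hD, hg0]
      funext i; fin_cases i <;> simp [D3, g0]
    · refine ⟨0, ?_⟩
      simp only [lieBr, hD, fderiv_fP]
      funext i; fin_cases i <;> simp [DfP, D3, fP, g0] <;> ring
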